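/- Let M be a compact manifold, V ⊆ M open, and ℱ a family of homeomorphisms of M such that the forward orbit of V under the semigroup generated by ℱ and the forward orbit of V under the semigroup generated by ℱ⁻¹ both equal M. If every measurable ℱ-invariant set has either zero or full Lebesgue measure in V, then the action of the semigroup generated by ℱ is ergodic on M with respect to the Lebesgue measure class; similarly, if for every x ∈ M the ℱ-orbit of x is dense in V, then the action is minimal on M. -/

import Mathlib

open MeasureTheory

noncomputable section

/-- `orbitN F V n`: points reachable from `V` by applying at most `n` maps from `F`. -/
def orbitN {M : Type*} [TopologicalSpace M] (F : Set (M ≃ₜ M)) (V : Set M) : ℕ → Set M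
  | 0 => V
  | n + 1 => orbitN F V n ∪ ⋃ f ∈ F, (f : M → M) '' orbitN F V n

/-- The orbit of `V` under the semigroup generated by `F`. -/
def orbit {M : Type*} [TopologicalSpace M] (F : Set (M ≃ₜ M)) (V : Set M) : Set M :=
  ⋃ n : ℕ, orbitN F V n

section Aux

variable {M : Type*} [TopologicalSpace M]

/-- Image of a set under a word (list) of homeomorphisms. -/
def wimg (l : List (M ≃ₜ M)) (A : Set M) : Set M :=
  l.foldr (fun f B => (f : M → M) '' B) A

@[simp] lemma wimg_nil (A : Set M) : wimg ([] : List (M ≃ₜ M)) A = A := rfl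

lemma wimg_cons (f : M ≃ₜ M) (l : List (M ≃ₜ M)) (A : Set M) :
    wimg (f :: l) A = (f : M → M) '' wimg l A := rfl

lemma wimg_isOpen {V : Set M} (hV : IsOpen V) : ∀ l : List (M ≃ₜ M), IsOpen (wimg l V)
  | [] => hV
  | f :: l => by rw [wimg_cons]; exact f.isOpenMap _ (wimg_isOpen hV l)

lemma wimg_mono {A B : Set M} (h : A ⊆ B) : ∀ l : List (M ≃ₜ M), wimg l A ⊆ wimg l B
  | [] => h
  | f :: l => by rw [wimg_cons, wimg_cons]; exact Set.image_mono (wimg_mono h l)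

lemma wimg_union (A B : Set M) :
    ∀ l : List (M ≃ₜ M), wimg l (A ∪ B) = wimg l A ∪ wimg l B
  | [] => rfl
  | f :: l => by rw [wimg_cons, wimg_union A B l, Set.image_union, wimg_cons, wimg_cons]

variable {F : Set (M ≃ₜ M)}

lemma orbitN_subset_iUnion_wimg {V : Set M} :
    ∀ n : ℕ, orbitN F V n ⊆
      ⋃ l : {l : List (M ≃ₜ M) // ∀ f ∈ l, f ∈ F}, wimg l.1 V
  | 0 => fun x hx => Set.mem_iUnion.2 ⟨⟨[], by simp⟩, hx⟩
  | n + 1 => by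
    rintro x (hx | hx)
    · exact orbitN_subset_iUnion_wimg n hx
    · simp only [Set.mem_iUnion, Set.mem_image] at hx
      obtain ⟨f, hf, y, hy, rfl⟩ := hx
      obtain ⟨⟨l, hl⟩, hyl⟩ := Set.mem_iUnion.1 (orbitN_subset_iUnion_wimg n hy)
      refine Set.mem_iUnion.2 ⟨⟨f :: l, ?_⟩, ⟨y, hyl, rfl⟩⟩
      intro g hg
      rcases List.mem_cons.1 hg with rfl | hg
      · exact hf
      · exact hl g hg

lemma wimg_subset_orbitN {S : Set M} :
    ∀ l : List (M ≃ₜ M), (∀ f ∈ l, f ∈ F) → wimg l S ⊆ orbitN F S l.length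
  | [], _ => subset_rfl
  | f :: l, hl => by
    rw [wimg_cons]
    have h1 : (f : M → M) '' wimg l S ⊆ (f : M → M) '' orbitN F S l.length :=
      Set.image_mono (wimg_subset_orbitN l fun g hg => hl g (List.mem_cons_of_mem _ hg))
    refine h1.trans ?_
    intro x hx
    exact Or.inr (Set.mem_iUnion₂.2 ⟨f, hl f (List.mem_cons_self), hx⟩)

lemma wimg_subset_orbit {S : Set M} (l : List (M ≃ₜ M)) (hl : ∀ f ∈ l, f ∈ F) :
    wimg l S ⊆ orbit F S :=
  (wimg_subset_orbitN l hl).trans (Set.subset_iUnion (fun n => orbitN F S n) l.length)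

lemma image_subset_orbit {S : Set M} {f : M ≃ₜ M} (hf : f ∈ F) :
    (f : M → M) '' S ⊆ orbit F S := by
  have : (f : M → M) '' S = wimg [f] S := rfl
  rw [this]
  exact wimg_subset_orbit [f] (by simpa using hf)

section Meas

variable [MeasurableSpace M] [BorelSpace M] {μ : Measure M}

lemma image_null (hns : ∀ f ∈ F, ∀ S : Set M, MeasurableSet S →
      (μ S = 0 ↔ μ ((f : M → M) '' S) = 0))
    {f : M ≃ₜ M} (hf : f ∈ F) {A : Set M} (hA : μ A = 0) :
    μ ((f : M → M) '' A) = 0 := by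
  have hT : μ (toMeasurable μ A) = 0 := by rwa [measure_toMeasurable]
  exact measure_mono_null (Set.image_mono (subset_toMeasurable μ A))
    ((hns f hf _ (measurableSet_toMeasurable μ A)).1 hT)

lemma symm_image_null (hns : ∀ f ∈ F, ∀ S : Set M, MeasurableSet S →
      (μ S = 0 ↔ μ ((f : M → M) '' S) = 0))
    {f : M ≃ₜ M} (hf : f ∈ F) {A : Set M} (hA : μ A = 0) :
    μ ((f.symm : M → M) '' A) = 0 := by
  rw [f.image_symm]
  have hT : μ (toMeasurable μ A) = 0 := by rwa [measure_toMeasurable]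
  have hme : MeasurableSet ((f : M → M) ⁻¹' toMeasurable μ A) :=
    (measurableSet_toMeasurable μ A).preimage f.continuous.measurable
  have h2 : μ ((f : M → M) ⁻¹' toMeasurable μ A) = 0 := by
    rw [hns f hf _ hme, Set.image_preimage_eq _ f.surjective]
    exact hT
  exact measure_mono_null (Set.preimage_mono (subset_toMeasurable μ A)) h2

lemma wimg_null_of_all (h : ∀ g ∈ F, ∀ A : Set M, μ A = 0 → μ ((g : M → M) '' A) = 0) :
    ∀ l : List (M ≃ₜ M), (∀ f ∈ l, f ∈ F) → ∀ {A : Set M}, μ A = 0 → μ (wimg l A) = 0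
  | [], _, _, hA => hA
  | f :: l, hl, A, hA => by
    rw [wimg_cons]
    exact h f (hl f (List.mem_cons_self))
      _ (wimg_null_of_all h l (fun g hg => hl g (List.mem_cons_of_mem _ hg)) hA)

lemma key2 (hns : ∀ f ∈ F, ∀ S : Set M, MeasurableSet S →
      (μ S = 0 ↔ μ ((f : M → M) '' S) = 0))
    {S V : Set M} (hVS : μ (S ∩ V) = 0) (hN : μ (orbit F S \ S) = 0) :
    ∀ l : List (M ≃ₜ M), (∀ g ∈ l, g ∈ Homeomorph.symm '' F) →
      μ (wimg l V ∩ S) = 0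
  | [], _ => by rwa [wimg_nil, Set.inter_comm]
  | g :: l, hl => by
    obtain ⟨f, hf, rfl⟩ := hl g (List.mem_cons_self)
    have IH : μ (wimg l V ∩ S) = 0 :=
      key2 hns hVS hN l fun g hg => hl g (List.mem_cons_of_mem _ hg)
    have hsub : wimg (f.symm :: l) V ∩ S ⊆
        (f.symm : M → M) '' ((wimg l V ∩ S) ∪ (orbit F S \ S)) := by
      rw [wimg_cons]
      rintro x ⟨⟨a, ha, rfl⟩, hxS⟩
      have haf : a ∈ (f : M → M) '' S := ⟨f.symm a, hxS, (f.apply_symm_apply a)⟩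
      have : a ∈ orbit F S := image_subset_orbit hf haf
      rcases Classical.em (a ∈ S) with haS | haS
      · exact ⟨a, Or.inl ⟨ha, haS⟩, rfl⟩
      · exact ⟨a, Or.inr ⟨this, haS⟩, rfl⟩
    refine measure_mono_null hsub (symm_image_null hns hf ?_)
    exact measure_union_null IH hN

end Meas

end Aux

/-- Let `M` be compact, `V ⊆ M` open, and `F` a family of homeomorphisms,
nonsingular with respect to the measure `μ` (the Lebesgue measure), such that the forward
orbits of `V` under the semigroups generated by `F` and by `F⁻¹` both equal `M`. If every
measurable `F`-invariant set has either zero or full `μ`-measure in `V`, then the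
semigroup action of `F` is ergodic with respect to the measure class of `μ`; similarly,
if every orbit is dense in `V`, the action is minimal. -/
theorem stmt19 {M : Type*} [TopologicalSpace M] [CompactSpace M] [MeasurableSpace M]
    [BorelSpace M] (μ : Measure M)
    (F : Set (M ≃ₜ M)) (V : Set M) (hV : IsOpen V) (hVne : V.Nonempty)
    (hns : ∀ f ∈ F, ∀ S : Set M, MeasurableSet S →
      (μ S = 0 ↔ μ ((f : M → M) '' S) = 0))
    (hfwd : orbit F V = Set.univ)
    (hbwd : orbit (Homeomorph.symm '' F) V = Set.univ) :
    ((∀ S : Set M, MeasurableSet S → μ (orbit F S \ S) = 0 →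
        μ (S ∩ V) = 0 ∨ μ (V \ S) = 0) →
      ∀ S : Set M, MeasurableSet S → μ (orbit F S \ S) = 0 → 0 < μ S → μ Sᶜ = 0) ∧
    ((∀ x : M, V ⊆ closure (orbit F {x})) → ∀ x : M, Dense (orbit F {x})) := by
  constructor
  · intro hyp S hS hinv hpos
    rcases hyp S hS hinv with h | h
    · -- μ (S ∩ V) = 0 : contradiction with 0 < μ S, using the backward cover
      exfalso
      have hcover : (Set.univ : Set M) ⊆
          ⋃ l : {l : List (M ≃ₜ M) // ∀ g ∈ l, g ∈ Homeomorph.symm '' F},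
            wimg l.1 V := by
        rw [← hbwd]
        intro x hx
        obtain ⟨n, hn⟩ := Set.mem_iUnion.1 hx
        exact orbitN_subset_iUnion_wimg n hn
      obtain ⟨t, ht⟩ := isCompact_univ.elim_finite_subcover
        (fun l : {l : List (M ≃ₜ M) // ∀ g ∈ l, g ∈ Homeomorph.symm '' F} => wimg l.1 V)
        (fun l => wimg_isOpen hV l.1) hcover
      have hS0 : μ S = 0 := by
        have hsub : S ⊆ ⋃ l ∈ (t : Set {l : List (M ≃ₜ M) // ∀ g ∈ l, g ∈ Homeomorph.symm '' F}), (wimg l.1 V ∩ S) := by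
          intro x hx
          obtain ⟨l, hlt, hxl⟩ := Set.mem_iUnion₂.1 (ht (Set.mem_univ x))
          exact Set.mem_iUnion₂.2 ⟨l, hlt, hxl, hx⟩
        refine measure_mono_null hsub ?_
        rw [measure_biUnion_null_iff t.countable_toSet]
        intro l _
        exact key2 hns h hinv l.1 l.2
      exact hpos.ne' hS0
    · -- μ (V \ S) = 0 : show μ Sᶜ = 0, using the forward cover
      have hcover : (Set.univ : Set M) ⊆
          ⋃ l : {l : List (M ≃ₜ M) // ∀ g ∈ l, g ∈ F}, wimg l.1 V := by
        rw [← hfwd]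
        intro x hx
        obtain ⟨n, hn⟩ := Set.mem_iUnion.1 hx
        exact orbitN_subset_iUnion_wimg n hn
      obtain ⟨t, ht⟩ := isCompact_univ.elim_finite_subcover
        (fun l : {l : List (M ≃ₜ M) // ∀ g ∈ l, g ∈ F} => wimg l.1 V)
        (fun l => wimg_isOpen hV l.1) hcover
      have hsub : Sᶜ ⊆ ⋃ l ∈ (t : Set {l : List (M ≃ₜ M) // ∀ g ∈ l, g ∈ F}), (wimg l.1 V \ S) := by
        intro x hx
        obtain ⟨l, hlt, hxl⟩ := Set.mem_iUnion₂.1 (ht (Set.mem_univ x))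
        exact Set.mem_iUnion₂.2 ⟨l, hlt, hxl, hx⟩
      refine measure_mono_null hsub ?_
      rw [measure_biUnion_null_iff t.countable_toSet]
      intro l _
      have hVsplit : wimg l.1 V ⊆ wimg l.1 (V \ S) ∪ wimg l.1 S := by
        rw [← wimg_union]
        exact wimg_mono (fun x hx => by
          rcases Classical.em (x ∈ S) with hxS | hxS
          · exact Or.inr hxS
          · exact Or.inl ⟨hx, hxS⟩) l.1
      have hsub2 : wimg l.1 V \ S ⊆ wimg l.1 (V \ S) ∪ (orbit F S \ S) := by
        rintro x ⟨hx1, hx2⟩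
        rcases hVsplit hx1 with hx | hx
        · exact Or.inl hx
        · exact Or.inr ⟨wimg_subset_orbit l.1 l.2 hx, hx2⟩
      refine measure_mono_null hsub2 (measure_union_null ?_ hinv)
      exact wimg_null_of_all (fun g hg A hA => image_null hns hg hA) l.1 l.2 h
  · -- minimality
    intro hdense x
    have hforward : ∀ f ∈ F, (f : M → M) '' orbit F {x} ⊆ orbit F {x} := by
      intro f hf y hy
      obtain ⟨z, hz, rfl⟩ := hy
      obtain ⟨n, hn⟩ := Set.mem_iUnion.1 hz
      refine Set.mem_iUnion.2 ⟨n + 1, Or.inr (Set.mem_iUnion₂.2 ⟨f, hf, z, hn, rfl⟩)⟩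
    have hC : ∀ n, orbitN F V n ⊆ closure (orbit F {x}) := by
      intro n
      induction n with
      | zero => exact hdense x
      | succ n ih =>
        rintro y (hy | hy)
        · exact ih hy
        · obtain ⟨f, hf, z, hz, rfl⟩ := by
            simpa only [Set.mem_iUnion, Set.mem_image] using hy
          have : (f : M → M) z ∈ (f : M → M) '' closure (orbit F {x}) := ⟨z, ih hz, rfl⟩
          have h2 : (f : M → M) '' closure (orbit F {x}) ⊆ closure (orbit F {x}) := by
            refine (image_closure_subset_closure_image f.continuous).trans ?_
            exact closure_mono (hforward f hf)
          exact h2 this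
    rw [dense_iff_closure_eq, Set.eq_univ_iff_forall]
    intro y
    have : y ∈ orbit F V := hfwd ▸ Set.mem_univ y
    obtain ⟨n, hn⟩ := Set.mem_iUnion.1 this
    exact hC n hn
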